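/- Let D be a prime congruent to 1 mod 4, let A, B be half-integers with A + B√D an algebraic integer of F = Q(√D), and suppose ~D = A² − B²D is a squarefree positive integer congruent to 1 mod 4. Let δ, n be integers with δ > 0, D − 4δ a square, n ≡ −c_K δ (mod 2D) where 2c_K ≡ 2A (mod D) and c_K is odd, and N := (δ²~D − n²)/(4D) a positive integer. Assume d_u(n) := δ(2n + 2δA)/D is a fundamental discriminant. Then gcd(δ, N) = 1. -/

import Mathlib

lemma four_dvd_of_odd_mul (D x : ℤ) (hD : Odd D) (h : (4:ℤ) ∣ D * x) : (4:ℤ) ∣ x := by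
  have h2 : ¬ (2:ℤ) ∣ D := by
    have := Int.odd_iff.mp hD
    omega
  have hc : IsCoprime (2:ℤ) D := (Int.prime_two.coprime_iff_not_dvd).mpr h2
  have hc4 : IsCoprime (4:ℤ) D := by
    have h' : IsCoprime ((2:ℤ) ^ 2) D := IsCoprime.pow_left hc
    norm_num at h'
    exact h'
  exact hc4.dvd_of_dvd_mul_left h



/-- `d` is a fundamental discriminant: the discriminant of a quadratic field. -/
def IsFundamentalDiscriminant (d : ℤ) : Prop :=
  (d % 4 = 1 ∧ Squarefree d) ∨
    (∃ m : ℤ, d = 4 * m ∧ Squarefree m ∧ (m % 4 = 2 ∨ m % 4 = 3))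

/-- Let `D` be a prime `≡ 1 mod 4`, `A = A2/2`, `B = B2/2` half-integers with
`A + B√D ∈ 𝓞 F` (i.e. `A2 ≡ B2 mod 2`), and `~D = A² - B²D` (i.e. `4 ~D = A2² - B2² D`)
squarefree, positive and `≡ 1 mod 4`.  Let `δ > 0` with `D - 4δ` a square, and `n` with
`n ≡ -c_K δ (mod 2D)`, where `c_K` is odd and `2 c_K ≡ 2A (mod D)`, and
`N = (δ² ~D - n²)/(4D)` a positive integer.  If `d_u(n) = δ(2n + 2δA)/D` is a fundamental
discriminant, then `gcd(δ, N) = 1`. -/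
theorem stmt_7 (D : ℤ) (hD : Prime D) (hD4 : D % 4 = 1)
    (A2 B2 : ℤ) (hhalf : A2 % 2 = B2 % 2)
    (Dt : ℤ) (hDt : 4 * Dt = A2 ^ 2 - B2 ^ 2 * D)
    (hDtsf : Squarefree Dt) (hDtpos : 0 < Dt) (hDt4 : Dt % 4 = 1)
    (cK : ℤ) (hcKodd : Odd cK) (hcKA : D ∣ 2 * cK - A2)
    (δ : ℤ) (hδ : 0 < δ) (s : ℤ) (hs : D - 4 * δ = s ^ 2)
    (n : ℤ) (hn : (2 * D) ∣ (n + cK * δ))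
    (N : ℤ) (hN : 4 * D * N = δ ^ 2 * Dt - n ^ 2) (hNpos : 0 < N)
    (du : ℤ) (hdu : D * du = δ * (2 * n + δ * A2))
    (hfund : IsFundamentalDiscriminant du) :
    Int.gcd δ N = 1 := by
  by_contra hg
  have hδ0 : δ ≠ 0 := hδ.ne'
  have hg0 : Int.gcd δ N ≠ 0 := fun h => hδ0 ((Int.gcd_eq_zero_iff.mp h).1)
  obtain ⟨p, hp, hpg⟩ := Nat.exists_prime_and_dvd hg
  have hPprime : Prime (p:ℤ) := Nat.prime_iff_prime_int.mp hp
  have hpδ : (p:ℤ) ∣ δ := dvd_trans (Int.natCast_dvd_natCast.mpr hpg) (Int.gcd_dvd_left δ N)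
  have hpN : (p:ℤ) ∣ N := dvd_trans (Int.natCast_dvd_natCast.mpr hpg) (Int.gcd_dvd_right δ N)
  -- basic facts
  have hδD : 4 * δ ≤ D := by nlinarith [sq_nonneg s]
  have hDpos : 0 < D := by linarith
  have hDodd : D % 2 = 1 := by omega
  -- p divides n
  have hpn : (p:ℤ) ∣ n := by
    apply hPprime.dvd_of_dvd_pow (n := 2)
    have hne : n ^ 2 = δ * (δ * Dt) - 4 * D * N := by linear_combination hN
    rw [hne]
    exact dvd_sub (hpδ.mul_right _) (hpN.mul_left (4 * D))
  rcases hp.eq_two_or_odd' with hp2 | hpodd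
  · -- p = 2
    subst hp2
    obtain ⟨d, hd⟩ := hpδ
    obtain ⟨m, hm⟩ := hpn
    obtain ⟨N', hN'⟩ := hpN
    push_cast at hd hm hN'
    -- s is odd
    have hsodd : s % 2 = 1 := by
      rcases Int.even_or_odd s with ⟨t, ht⟩ | hso
      · exfalso
        have hD0 : D = 4 * (t * t) + 4 * δ := by linear_combination hs + (s + t + t) * ht
        omega
      · exact Int.odd_iff.mp hso
    obtain ⟨t, ht⟩ : ∃ t, s = 2 * t + 1 := ⟨(s - 1) / 2, by omega⟩
    obtain ⟨u, hu⟩ := Int.even_mul_succ_self t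
    have hD8 : D % 8 = 1 := by
      have hDe : D = 8 * u + 1 + 8 * d := by
        linear_combination hs + (s + 2 * t + 1) * ht + 4 * hu + 4 * hd
      omega
    -- du = 4 * M
    have h4Ddu : (4:ℤ) ∣ D * du := ⟨2 * d * m + d ^ 2 * A2, by rw [hdu, hd, hm]; ring⟩
    have h4du : (4:ℤ) ∣ du := four_dvd_of_odd_mul D du (Int.odd_iff.mpr hDodd) h4Ddu
    obtain ⟨M, hM⟩ := h4du
    have hDM : D * M = 2 * d * m + d ^ 2 * A2 := by
      have h4 : (4:ℤ) * (D * M) = 4 * (2 * d * m + d ^ 2 * A2) := by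
        have h' := hdu
        rw [hM, hd, hm] at h'
        linear_combination h'
      exact mul_left_cancel₀ (by norm_num : (4:ℤ) ≠ 0) h4
    rcases hfund with ⟨hmod, -⟩ | ⟨m₀, hm₀4, hsf, hmod⟩
    · omega
    · have hm₀M : m₀ = M := by omega
      have h4M : (4:ℤ) ∣ D * M := by
        rcases Int.even_or_odd d with ⟨e, he⟩ | hdo
        · exact ⟨e * m + e ^ 2 * A2, by rw [hDM, he]; ring⟩
        · -- d odd, hence m odd
          have hDtodd : Odd Dt := Int.odd_iff.mpr (by omega)
          have hmsq : m ^ 2 = d ^ 2 * Dt - 2 * (D * N') := by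
            have h4 : (4:ℤ) * (m ^ 2) = 4 * (d ^ 2 * Dt - 2 * (D * N')) := by
              have h' := hN
              rw [hd, hm, hN'] at h'
              linear_combination h'
            exact mul_left_cancel₀ (by norm_num : (4:ℤ) ≠ 0) h4
          have hmodd : Odd m := by
            have hsq : Odd (m ^ 2) := by
              rw [hmsq]
              exact Odd.sub_even ((hdo.pow).mul hDtodd) ⟨D * N', by ring⟩
            rcases Int.even_or_odd m with ⟨e, he⟩ | hmo
            · exfalso
              have : m ^ 2 = 2 * (2 * (e * e)) := by rw [he]; ring
              have := Int.odd_iff.mp hsq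
              omega
            · exact hmo
          -- A2 is even
          have hA2even : A2 % 2 = 0 := by
            by_contra hA2o
            have hA2odd : A2 % 2 = 1 := by omega
            obtain ⟨a1, ha1⟩ : ∃ a1, A2 = 2 * a1 + 1 := ⟨(A2 - 1) / 2, by omega⟩
            obtain ⟨b1, hb1⟩ : ∃ b1, B2 = 2 * b1 + 1 := ⟨(B2 - 1) / 2, by omega⟩
            obtain ⟨u1, hu1⟩ := Int.even_mul_succ_self a1
            obtain ⟨v1, hv1⟩ := Int.even_mul_succ_self b1
            obtain ⟨w, hw⟩ : ∃ w, D = 8 * w + 1 := ⟨(D - 1) / 8, by omega⟩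
            have hkey : 4 * Dt = 8 * (u1 - 8 * v1 * w - v1 - w) := by
              subst ha1 hb1 hw
              linear_combination hDt + 4 * hu1 - 4 * (8 * w + 1) * hv1
            omega
          obtain ⟨a, ha⟩ : ∃ a, A2 = 2 * a := ⟨A2 / 2, by omega⟩
          obtain ⟨b, hb⟩ : ∃ b, B2 = 2 * b := ⟨B2 / 2, by omega⟩
          have hDt' : Dt = a ^ 2 - b ^ 2 * D := by
            have h4 : (4:ℤ) * Dt = 4 * (a ^ 2 - b ^ 2 * D) := by
              rw [ha, hb] at hDt
              linear_combination hDt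
            linarith
          have haodd : a % 2 = 1 := by
            by_contra hae
            obtain ⟨a1, ha1⟩ : ∃ a1, a = 2 * a1 := ⟨a / 2, by omega⟩
            rcases Int.even_or_odd b with ⟨b1, hb1⟩ | hbo
            · have : Dt = 4 * (a1 ^ 2 - (b1 * b1) * D) := by
                rw [ha1, hb1] at hDt'
                linear_combination hDt'
              omega
            · obtain ⟨b1, hb1⟩ := hbo
              obtain ⟨v, hv⟩ := Int.even_mul_succ_self b1
              obtain ⟨w1, hw1⟩ : ∃ w1, D = 4 * w1 + 1 := ⟨(D - 1) / 4, by omega⟩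
              have : Dt = 4 * (a1 ^ 2 - 8 * v * w1 - 2 * v - w1) - 1 := by
                subst ha1 hb1 hw1
                linear_combination hDt' - 4 * (4 * w1 + 1) * hv
              omega
          -- final computation : D*M = 2dm + 2ad², sum of two odd numbers times 2
          have haO : Odd a := Int.odd_iff.mpr haodd
          have heven : Even (d * m + a * d ^ 2) :=
            Odd.add_odd (hdo.mul hmodd) (haO.mul hdo.pow)
          obtain ⟨K, hK⟩ := heven
          exact ⟨K, by linear_combination hDM + d ^ 2 * ha + 2 * hK⟩
      have h4M' : (4:ℤ) ∣ M := four_dvd_of_odd_mul D M (Int.odd_iff.mpr hDodd) h4M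
      obtain ⟨c, hc⟩ := h4M'
      omega
  · -- p odd
    have hpD : ¬ (p:ℤ) ∣ D := by
      intro hdvd
      have hDnat : Nat.Prime D.natAbs := Int.prime_iff_natAbs_prime.mp hD
      have : p ∣ D.natAbs := Int.natCast_dvd_natCast.mp (by rwa [Int.natAbs_of_nonneg hDpos.le])
      have hpeq : p = D.natAbs := (Nat.prime_dvd_prime_iff_eq hp hDnat).mp this
      have hDδ : D ∣ δ := by
        rw [← Int.natAbs_of_nonneg hDpos.le, ← hpeq]
        exact hpδ
      have := Int.le_of_dvd hδ hDδ
      linarith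
    have hcop : IsCoprime ((p:ℤ)) D := hPprime.coprime_iff_not_dvd.mpr hpD
    have hp2du : ((p:ℤ))^2 ∣ du := by
      have hc2 : IsCoprime ((p:ℤ)^2) D := hcop.pow_left
      apply hc2.dvd_of_dvd_mul_left
      obtain ⟨x, hx⟩ := hpδ
      obtain ⟨y, hy⟩ := hpn
      refine ⟨2 * x * y + A2 * x ^ 2, ?_⟩
      rw [hdu, hx, hy]; ring
    rcases hfund with ⟨-, hsf⟩ | ⟨m₀, hm₀, hsf, hmod⟩
    · exact hPprime.not_unit (hsf (p:ℤ) (by rw [← sq]; exact hp2du))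
    · have hp2 : ¬ ((p:ℤ)) ∣ 2 := by
        intro h
        have : p ∣ 2 := Int.natCast_dvd_natCast.mp (by exact_mod_cast h)
        have hple := Nat.le_of_dvd two_pos this
        have := hp.two_le
        have : p = 2 := by omega
        rw [this] at hpodd
        exact (Nat.not_odd_iff_even.mpr (by norm_num)) hpodd
      have hcop2 : IsCoprime ((p:ℤ)^2) 4 := by
        have h1 : IsCoprime ((p:ℤ)) 2 := hPprime.coprime_iff_not_dvd.mpr hp2
        have h2 : IsCoprime ((p:ℤ)^2) ((2:ℤ)^2) := (h1.pow_left).pow_right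
        norm_num at h2; exact h2
      have : ((p:ℤ))^2 ∣ m₀ := by
        apply hcop2.dvd_of_dvd_mul_left
        rw [hm₀] at hp2du
        exact hp2du
      exact hPprime.not_unit (hsf (p:ℤ) (by rw [← sq]; exact this))
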